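/- Let p ≥ 1 and let t, s, A, B be real numbers with A·B ≤ 0. Then |tA + sB|^p ≥ (|t|^p·A + |s|^p·B)·|A+B|^{p-2}·(A+B), where the right-hand side is interpreted as 0 when A+B = 0. -/

import Mathlib

/-- Tangent line inequality for `|x|^p` at a nonnegative point `u`. -/
lemma tangent_abs_rpow {p : ℝ} (hp : 1 ≤ p) {u : ℝ} (hu : 0 ≤ u) (x : ℝ) :
    u ^ p + p * u ^ (p - 1) * (x - u) ≤ |x| ^ p := by
  rcases eq_or_lt_of_le hu with h0 | hu0
  · -- u = 0
    rcases eq_or_lt_of_le hp with hp1 | hp1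
    · subst hp1
      simp only [← h0, Real.rpow_one, sub_self, Real.rpow_zero]
      simpa using le_abs_self x
    · rw [← h0, Real.zero_rpow (by positivity), Real.zero_rpow (by linarith)]
      have : (0:ℝ) ≤ |x| ^ p := Real.rpow_nonneg (abs_nonneg x) p
      linarith
  · have hup : u ^ (p - 1) = u ^ p / u := Real.rpow_sub_one (ne_of_gt hu0) p
    have hupos : (0:ℝ) < u ^ p := Real.rpow_pos_of_pos hu0 p
    have hup1pos : (0:ℝ) < u ^ (p - 1) := Real.rpow_pos_of_pos hu0 _
    rcases le_or_gt 0 x with hx | hx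
    · have hs : (-1:ℝ) ≤ (x - u) / u := by
        rw [le_div_iff₀ hu0]; linarith
      have hb := one_add_mul_self_le_rpow_one_add hs hp
      have h1 : (1 + (x - u) / u) = x / u := by field_simp; ring
      rw [h1, Real.div_rpow hx hu0.le] at hb
      have : u ^ p * (1 + p * ((x - u) / u)) ≤ u ^ p * (x ^ p / u ^ p) :=
        mul_le_mul_of_nonneg_left hb hupos.le
      rw [mul_div_cancel₀ _ (ne_of_gt hupos)] at this
      rw [abs_of_nonneg hx]
      calc u ^ p + p * u ^ (p - 1) * (x - u)
          = u ^ p * (1 + p * ((x - u) / u)) := by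
            rw [hup]; field_simp
        _ ≤ x ^ p := this
    · have hneg : u ^ p + p * u ^ (p - 1) * (x - u) ≤ 0 := by
        have hup' : u ^ p = u ^ (p - 1) * u := by
          rw [hup]; field_simp
        rw [hup']
        have h1 : u + p * (x - u) ≤ 0 := by nlinarith
        nlinarith [hup1pos.le]
      have : (0:ℝ) ≤ |x| ^ p := Real.rpow_nonneg (abs_nonneg x) p
      linarith

/-- Core inequality. -/
lemma core_ineq {p u v b c : ℝ} (hp : 1 ≤ p) (hu : 0 ≤ u) (hv : 0 ≤ v)
    (hb : 0 ≤ b) (hc : 0 < c) :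
    (u ^ p * (b + c) - v ^ p * b) * c ^ (p - 1) ≤ |u * (b + c) - v * b| ^ p := by
  have h1 := tangent_abs_rpow hp (mul_nonneg hu hc.le) (u * (b + c) - v * b)
  have h2 := tangent_abs_rpow hp hu v
  rw [abs_of_nonneg hv] at h2
  have hmul : (u * c) ^ p = u ^ p * c ^ p := Real.mul_rpow hu hc.le
  have hmul1 : (u * c) ^ (p - 1) = u ^ (p - 1) * c ^ (p - 1) := Real.mul_rpow hu hc.le
  have hcp : c ^ p = c ^ (p - 1) * c := by
    rw [Real.rpow_sub_one (ne_of_gt hc) p]; field_simp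
  have hc1 : (0:ℝ) ≤ c ^ (p - 1) := Real.rpow_nonneg hc.le _
  rw [hmul, hmul1, hcp] at h1
  nlinarith [h1, h2, mul_nonneg (mul_nonneg hb hc1) (sub_nonneg.mpr h2)]

/-- Positive-sum half case: `0 ≤ A`, `B ≤ 0`. -/
lemma half_case {p t s A B : ℝ} (hp : 1 ≤ p) (hA : 0 ≤ A) (hB : B ≤ 0)
    (hAB : 0 < A + B) :
    (|t| ^ p * A + |s| ^ p * B) * (A + B) ^ (p - 1) ≤ |t * A + s * B| ^ p := by
  have hb : (0:ℝ) ≤ -B := by linarith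
  have h := core_ineq (u := |t|) (v := |s|) hp (abs_nonneg t) (abs_nonneg s) hb hAB
  have e : -B + (A + B) = A := by ring
  rw [e] at h
  have habs2 : |t| * A - |s| * -B = |t * A| - |s * B| := by
    rw [abs_mul, abs_mul, abs_of_nonneg hA, abs_of_nonpos hB]
  have f1 : |t * A| - |s * B| ≤ |t * A + s * B| := by
    have := abs_sub_abs_le_abs_sub (t * A) (-(s * B))
    rwa [abs_neg, sub_neg_eq_add] at this
  have f2 : |s * B| - |t * A| ≤ |t * A + s * B| := by
    have := abs_sub_abs_le_abs_sub (-(s * B)) (t * A)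
    rwa [abs_neg, show -(s * B) - t * A = -(t * A + s * B) by ring, abs_neg] at this
  have habs : |(|t| * A - |s| * -B)| ≤ |t * A + s * B| := by
    rw [habs2, abs_le]
    constructor <;> linarith
  have hmono : |(|t| * A - |s| * -B)| ^ p ≤ |t * A + s * B| ^ p :=
    Real.rpow_le_rpow (abs_nonneg _) habs (by linarith)
  calc (|t| ^ p * A + |s| ^ p * B) * (A + B) ^ (p - 1)
      = (|t| ^ p * A - |s| ^ p * -B) * (A + B) ^ (p - 1) := by ring
    _ ≤ |(|t| * A - |s| * -B)| ^ p := h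
    _ ≤ |t * A + s * B| ^ p := hmono

/-- Positive-sum case. -/
lemma pos_case {p t s A B : ℝ} (hp : 1 ≤ p) (hAB : A * B ≤ 0) (hpos : 0 < A + B) :
    (|t| ^ p * A + |s| ^ p * B) * (A + B) ^ (p - 1) ≤ |t * A + s * B| ^ p := by
  rcases mul_nonpos_iff.mp hAB with ⟨hA, hB⟩ | ⟨hA, hB⟩
  · -- 0 ≤ A, B ≤ 0
    exact half_case hp hA hB hpos
  · -- A ≤ 0, 0 ≤ B
    have h := half_case (t := s) (s := t) (A := B) (B := A) hp hB hA (by linarith)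
    calc (|t| ^ p * A + |s| ^ p * B) * (A + B) ^ (p - 1)
        = (|s| ^ p * B + |t| ^ p * A) * (B + A) ^ (p - 1) := by ring_nf
      _ ≤ |s * B + t * A| ^ p := h
      _ = |t * A + s * B| ^ p := by ring_nf

theorem stmt_0 (p t s A B : ℝ) (hp : 1 ≤ p) (hAB : A * B ≤ 0) :
    |t * A + s * B| ^ p ≥
      (|t| ^ p * A + |s| ^ p * B) * (Real.sign (A + B) * |A + B| ^ (p - 1)) := by
  rcases lt_trichotomy (A + B) 0 with h | h | h
  · rw [Real.sign_of_neg h, abs_of_neg h]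
    have h' := pos_case (t := t) (s := s) (A := -A) (B := -B) hp (by nlinarith) (by linarith)
    have e1 : |t * -A + s * -B| = |t * A + s * B| := by rw [← abs_neg]; ring_nf
    rw [e1] at h'
    calc (|t| ^ p * A + |s| ^ p * B) * (-1 * (-(A + B)) ^ (p - 1))
        = (|t| ^ p * (-A) + |s| ^ p * (-B)) * (-A + -B) ^ (p - 1) := by ring_nf
      _ ≤ |t * A + s * B| ^ p := h'
  · rw [h, Real.sign_zero]
    simpa using Real.rpow_nonneg (abs_nonneg (t * A + s * B)) p
  · rw [Real.sign_of_pos h, abs_of_pos h, one_mul]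
    exact pos_case hp hAB h
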